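/- Let f : ℝ^d → ℝ be differentiable, let β, γ : (0, ∞) → ℝ be continuously differentiable, and define the Euclidean Bregman Lagrangian L(x, v, t) = e^{γ_t} ( (1/2)‖v‖² − e^{β_t} f(x) ). A twice continuously differentiable curve X : (0, ∞) → ℝ^d satisfies the Euler-Lagrange equation d/dt [ ∂L/∂v (X_t, Ẋ_t, t) ] = ∂L/∂x (X_t, Ẋ_t, t) if and only if it satisfies Ẍ_t + γ̇_t Ẋ_t + e^{β_t} ∇f(X_t) = 0. -/

import Mathlib

open scoped RealInnerProductSpace
open Real Set

noncomputable section

/-- The Euclidean Bregman Lagrangian `L(x, v, t) = e^{γ_t} ((1/2)‖v‖² − e^{β_t} f(x))`. -/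
def eucBregmanLagrangian (d : ℕ) (β γ : ℝ → ℝ) (f : EuclideanSpace ℝ (Fin d) → ℝ)
    (x v : EuclideanSpace ℝ (Fin d)) (t : ℝ) : ℝ :=
  Real.exp (γ t) * ((1 / 2) * ‖v‖ ^ 2 - Real.exp (β t) * f x)

lemma hasGradientAt_quad {d : ℕ} (c k : ℝ) (v0 : EuclideanSpace ℝ (Fin d)) :
    HasGradientAt (fun v : EuclideanSpace ℝ (Fin d) => c * ((1 / 2) * ‖v‖ ^ 2 - k))
      (c • v0) v0 := by
  rw [hasGradientAt_iff_hasFDerivAt]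
  have h : HasFDerivAt (fun v : EuclideanSpace ℝ (Fin d) => c * ((1 / 2) * ‖v‖ ^ 2 - k))
      (c • (((1 / 2 : ℝ) • (2 • ((innerSL ℝ v0).comp (ContinuousLinearMap.id ℝ _)))) -
        (0 : EuclideanSpace ℝ (Fin d) →L[ℝ] ℝ))) v0 := by
    have h1 : HasFDerivAt (fun v : EuclideanSpace ℝ (Fin d) => ‖v‖ ^ 2)
        (2 • ((innerSL ℝ v0).comp (ContinuousLinearMap.id ℝ _))) v0 :=
      (hasFDerivAt_id v0).norm_sq
    exact ((h1.const_mul (1 / 2 : ℝ)).sub (hasFDerivAt_const k v0)).const_mul c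
  refine h.congr_fderiv ?_
  ext y
  simp [real_inner_smul_left]

lemma hasGradientAt_pot {d : ℕ} (c k A : ℝ) (f : EuclideanSpace ℝ (Fin d) → ℝ)
    (x0 : EuclideanSpace ℝ (Fin d)) (hf : DifferentiableAt ℝ f x0) :
    HasGradientAt (fun x => c * (A - k * f x)) ((-(c * k)) • gradient f x0) x0 := by
  rw [hasGradientAt_iff_hasFDerivAt]
  have hg := hf.hasGradientAt.hasFDerivAt
  have h : HasFDerivAt (fun x => c * (A - k * f x))
      (c • ((0 : EuclideanSpace ℝ (Fin d) →L[ℝ] ℝ) -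
        k • (InnerProductSpace.toDual ℝ _ (gradient f x0)))) x0 :=
    ((hasFDerivAt_const A x0).sub (hg.const_mul k)).const_mul c
  refine h.congr_fderiv ?_
  ext y
  simp [real_inner_smul_left]
  ring

theorem euclidean_bregman_euler_lagrange_iff
    (d : ℕ) (f : EuclideanSpace ℝ (Fin d) → ℝ) (hf : Differentiable ℝ f)
    (β γ β' γ' : ℝ → ℝ)
    (hβ : ∀ t ∈ Set.Ioi (0 : ℝ), HasDerivAt β (β' t) t)
    (hγ : ∀ t ∈ Set.Ioi (0 : ℝ), HasDerivAt γ (γ' t) t)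
    (hβ'c : ContinuousOn β' (Set.Ioi 0)) (hγ'c : ContinuousOn γ' (Set.Ioi 0))
    (X X' X'' : ℝ → EuclideanSpace ℝ (Fin d))
    (hX : ∀ t ∈ Set.Ioi (0 : ℝ), HasDerivAt X (X' t) t)
    (hX' : ∀ t ∈ Set.Ioi (0 : ℝ), HasDerivAt X' (X'' t) t)
    (hX''c : ContinuousOn X'' (Set.Ioi 0)) :
    (∀ t ∈ Set.Ioi (0 : ℝ),
      HasDerivAt
        (fun s : ℝ => gradient (fun v => eucBregmanLagrangian d β γ f (X s) v s) (X' s))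
        (gradient (fun x => eucBregmanLagrangian d β γ f x (X' t) t) (X t)) t) ↔
    (∀ t ∈ Set.Ioi (0 : ℝ),
      X'' t + γ' t • X' t + Real.exp (β t) • gradient f (X t) = 0) := by
  have hgradV : ∀ s : ℝ,
      gradient (fun v => eucBregmanLagrangian d β γ f (X s) v s) (X' s)
        = Real.exp (γ s) • X' s := fun s =>
    (hasGradientAt_quad (Real.exp (γ s)) (Real.exp (β s) * f (X s)) (X' s)).gradient
  have hgradX : ∀ t : ℝ,
      gradient (fun x => eucBregmanLagrangian d β γ f x (X' t) t) (X t)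
        = (-(Real.exp (γ t) * Real.exp (β t))) • gradient f (X t) := fun t =>
    (hasGradientAt_pot (Real.exp (γ t)) (Real.exp (β t)) ((1 / 2) * ‖X' t‖ ^ 2) f (X t)
      (hf.differentiableAt)).gradient
  have hfun : (fun s : ℝ => gradient (fun v => eucBregmanLagrangian d β γ f (X s) v s) (X' s))
      = fun s => Real.exp (γ s) • X' s := funext hgradV
  have hD : ∀ t ∈ Set.Ioi (0 : ℝ),
      HasDerivAt (fun s => Real.exp (γ s) • X' s)
        (Real.exp (γ t) • X'' t + (Real.exp (γ t) * γ' t) • X' t) t := fun t ht =>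
    HasDerivAt.smul ((hγ t ht).exp) (hX' t ht)
  constructor
  · intro hEL t ht
    have h1 := hEL t ht
    rw [hfun, hgradX t] at h1
    have h2 := (hD t ht).unique h1
    have h3 : Real.exp (γ t) • (X'' t + γ' t • X' t + Real.exp (β t) • gradient f (X t)) = 0 := by
      linear_combination (norm := module) h2
    rcases smul_eq_zero.mp h3 with h | h
    · exact absurd h (Real.exp_ne_zero _)
    · exact h
  · intro hEq t ht
    have h2 : Real.exp (γ t) • X'' t + (Real.exp (γ t) * γ' t) • X' t
        = (-(Real.exp (γ t) * Real.exp (β t))) • gradient f (X t) := by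
      have h3 := hEq t ht
      linear_combination (norm := module) (Real.exp (γ t) : ℝ) • h3
    rw [hfun, hgradX t, ← h2]
    exact hD t ht
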